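/- Let X be a subshift in which periodic points are dense, and let f : X → X be a shift-commuting continuous map. If f is injective, then f is surjective. -/

import Mathlib

/-- A subshift with dense periodic points: an injective cellular automaton on it is
surjective.  `X` is a closed shift-invariant subset of `ℤ → A` (product topology,
`A` a finite discrete alphabet), `f` is continuous on `X`, maps `X` into `X`, and
commutes with the shift `x ↦ (i ↦ x (i+1))`. -/
theorem stmt_2 {A : Type*} [Fintype A] [TopologicalSpace A] [DiscreteTopology A]
    (X : Set (ℤ → A)) (hclosed : IsClosed X)
    (hinv : ∀ x ∈ X, (fun i => x (i + 1)) ∈ X)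
    (hdense : ∀ x ∈ X,
      x ∈ closure {y | y ∈ X ∧ ∃ p : ℕ, 1 ≤ p ∧ ∀ i : ℤ, y (i + p) = y i})
    (f : (ℤ → A) → (ℤ → A))
    (hmaps : Set.MapsTo f X X) (hcont : ContinuousOn f X)
    (hcomm : ∀ x ∈ X, f (fun i => x (i + 1)) = fun i => f x (i + 1))
    (hinj : Set.InjOn f X) :
    Set.SurjOn f X X := by
  classical
  set S : (ℤ → A) → (ℤ → A) := fun x i => x (i + 1) with hS
  -- iterated shift formula
  have hSit : ∀ (p : ℕ) (x : ℤ → A) (i : ℤ), S^[p] x i = x (i + p) := by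
    intro p
    induction p with
    | zero => intro x i; simp
    | succ n ih =>
      intro x i
      rw [Function.iterate_succ_apply]
      rw [ih (S x) i]
      simp [hS]
      ring_nf
  -- shift preserves X
  have hSX : ∀ x ∈ X, S x ∈ X := hinv
  have hSitX : ∀ (p : ℕ), ∀ x ∈ X, S^[p] x ∈ X := by
    intro p
    induction p with
    | zero => intro x hx; simpa using hx
    | succ n ih =>
      intro x hx
      rw [Function.iterate_succ_apply]
      exact ih _ (hSX x hx)
  -- f commutes with iterated shift
  have hfS : ∀ (p : ℕ), ∀ x ∈ X, f (S^[p] x) = S^[p] (f x) := by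
    intro p
    induction p with
    | zero => intro x hx; simp
    | succ n ih =>
      intro x hx
      rw [Function.iterate_succ_apply, ih _ (hSX x hx),
        Function.iterate_succ_apply]
      congr 1
      exact hcomm x hx
  -- each periodic point is in f '' X
  have hper : ∀ y ∈ X, ∀ p : ℕ, 1 ≤ p → (∀ i : ℤ, y (i + p) = y i) →
      y ∈ f '' X := by
    intro y hy p hp hyp
    set P : Set (ℤ → A) := {z | z ∈ X ∧ S^[p] z = z} with hP
    have hyP : y ∈ P := ⟨hy, funext fun i => by rw [hSit, hyp]⟩
    -- P is finite
    have hPfin : P.Finite := by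
      have key : ∀ z ∈ P, ∀ i : ℤ, z i = z (i.emod p) := by
        intro z hz i
        have hstep : ∀ j : ℤ, z (j + p) = z j := by
          intro j
          have := congrFun hz.2 j
          rw [hSit] at this
          exact this
        have hper' : ∀ (k : ℤ) (j : ℤ), z (j + p * k) = z j := by
          intro k
          induction k using Int.induction_on with
          | zero => intro j; simp
          | succ n ih =>
            intro j
            have h1 : j + (p : ℤ) * (n + 1) = (j + p * n) + p := by ring
            rw [h1, hstep, ih]
          | pred n ih =>
            intro j
            have h2 : z ((j + p * (-(n:ℤ) - 1)) + p) = z (j + p * (-(n:ℤ) - 1)) :=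
              hstep _
            have h3 : (j + (p:ℤ) * (-(n:ℤ) - 1)) + p = j + p * (-(n:ℤ)) := by ring
            rw [h3] at h2
            rw [← h2, ih]
        have hmod : i.emod p = i + p * (-(i / p)) := by
          have h := Int.emod_add_mul_ediv i p
          show i % (p:ℤ) = _
          linarith
        rw [hmod, hper']
      have : Set.InjOn (fun z : ℤ → A => fun j : Fin p => z j) P := by
        intro z1 h1 z2 h2 he
        funext i
        rw [key z1 h1 i, key z2 h2 i]
        have hlt : i.emod p < (p : ℤ) :=
          Int.emod_lt_of_pos i (by positivity)
        have hge : 0 ≤ i.emod p := Int.emod_nonneg i (by positivity)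
        have : z1 ((⟨(i.emod p).toNat, by omega⟩ : Fin p) : ℤ) =
            z2 ((⟨(i.emod p).toNat, by omega⟩ : Fin p) : ℤ) := by
          exact congrFun he _
        simpa [Int.toNat_of_nonneg hge] using this
      exact Set.Finite.of_finite_image
        (Set.toFinite _) this
    -- f maps P into P
    have hmapP : Set.MapsTo f P P := by
      intro z hz
      refine ⟨hmaps hz.1, ?_⟩
      rw [← hfS p z hz.1, hz.2]
    have hinjP : Set.InjOn f P := hinj.mono (fun z hz => hz.1)
    have hbij : Set.BijOn f P P :=
      (hPfin.injOn_iff_bijOn_of_mapsTo hmapP).mp hinjP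
    obtain ⟨z, hzP, hzy⟩ := hbij.surjOn hyP
    exact ⟨z, hzP.1, hzy⟩
  -- f '' X is closed
  have hXcomp : IsCompact X := hclosed.isCompact
  have hfXclosed : IsClosed (f '' X) :=
    (hXcomp.image_of_continuousOn hcont).isClosed
  -- conclude
  intro x hx
  have hsub : {y | y ∈ X ∧ ∃ p : ℕ, 1 ≤ p ∧ ∀ i : ℤ, y (i + p) = y i} ⊆
      f '' X := by
    rintro y ⟨hy, p, hp, hyp⟩
    exact hper y hy p hp hyp
  have := hdense x hx
  have : x ∈ closure (f '' X) := closure_mono hsub this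
  rwa [hfXclosed.closure_eq] at this
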